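/- The Guthrie–Nymann Cantorval X = { ∑_{n≥1} x_n/4^n : ∀n, x_n ∈ {0,2,3,5} } satisfies X = C₁ + C₂ where C₁ = { ∑_{n∈A} 2/4^n : A ⊆ ℕ_{>0} } and C₂ = { ∑_{n∈B} 3/4^n : B ⊆ ℕ_{>0} }. -/

import Mathlib

noncomputable def centerOfDistances (X : Set ℝ) : Set ℝ :=
  {α | 0 ≤ α ∧ ∀ x ∈ X, ∃ y ∈ X, |x - y| = α}

noncomputable def subsums (a : ℕ → ℝ) : Set ℝ :=
  {x | ∃ A : Set ℕ, x = ∑' n : A, a n}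

noncomputable def cantorval : Set ℝ :=
  {x | ∃ d : ℕ → ℝ, (∀ n, d n ∈ ({0, 2, 3, 5} : Set ℝ)) ∧
    x = ∑' n : ℕ, d n / 4 ^ (n + 1)}

lemma mysummable (c : ℝ) : Summable (fun n : ℕ => c / 4 ^ (n + 1)) := by
  have h : Summable (fun n : ℕ => c / 4 * (1 / 4 : ℝ) ^ n) :=
    (summable_geometric_of_lt_one (by norm_num) (by norm_num)).mul_left _
  refine h.congr fun n => ?_
  rw [pow_succ, one_div, inv_pow]
  ring

open Pointwise in
theorem stmt6 :
    cantorval = subsums (fun n => (2 : ℝ) / 4 ^ (n + 1)) +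
      subsums (fun n => (3 : ℝ) / 4 ^ (n + 1)) := by
  ext x
  constructor
  · rintro ⟨d, hd, rfl⟩
    set A : Set ℕ := {n | d n = 2 ∨ d n = 5} with hA
    set B : Set ℕ := {n | d n = 3 ∨ d n = 5} with hB
    refine ⟨_, ⟨A, rfl⟩, _, ⟨B, rfl⟩, ?_⟩
    rw [tsum_subtype A (fun n => (2:ℝ)/4^(n+1)), tsum_subtype B (fun n => (3:ℝ)/4^(n+1))]
    beta_reduce
    rw [← Summable.tsum_add ((mysummable 2).indicator A) ((mysummable 3).indicator B)]
    refine tsum_congr fun n => ?_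
    have h := hd n
    simp only [Set.mem_insert_iff, Set.mem_singleton_iff] at h
    rcases h with h | h | h | h <;>
      simp only [Set.indicator_apply, Set.mem_setOf_eq, hA, hB, h] <;>
      norm_num [← add_div]
  · rintro ⟨y, ⟨A, rfl⟩, z, ⟨B, rfl⟩, rfl⟩
    refine ⟨fun n => A.indicator (fun _ => 2) n + B.indicator (fun _ => 3) n,
      fun n => ?_, ?_⟩
    · by_cases hA : n ∈ A <;> by_cases hB : n ∈ B <;>
        simp [Set.indicator_apply, hA, hB] <;> norm_num
    · rw [tsum_subtype A (fun n => (2:ℝ)/4^(n+1)), tsum_subtype B (fun n => (3:ℝ)/4^(n+1))]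
      beta_reduce
      rw [← Summable.tsum_add ((mysummable 2).indicator A) ((mysummable 3).indicator B)]
      refine tsum_congr fun n => ?_
      by_cases hA : n ∈ A <;> by_cases hB : n ∈ B <;>
        simp [Set.indicator_apply, hA, hB] <;> ring
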